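/- arXiv:2409.12321 — 2 statements merged into one kernel-verified Lean document; each statement's English description precedes it below -/
import Mathlib

section
/- The number of partitions of n in which no part is congruent to 3 modulo 6 equals the number of partitions of n in which each odd part appears at most twice (even parts unrestricted). -/
open Multiset

namespace Glaisher36

/-- The per-part map: an odd part `y = 3^j * x` with `3 ∤ x` becomes `3^j` copies of `x`;
even parts are unchanged. -/
def f3 (y : ℕ) : Multiset ℕ :=
  if Odd y then Multiset.replicate (3 ^ (y.factorization 3)) (y / 3 ^ (y.factorization 3))
  else {y}

lemma odd_ne_zero {y : ℕ} (hy : Odd y) : y ≠ 0 := by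
  rintro rfl; simp [Nat.odd_iff] at hy

lemma ord_compl_odd {y : ℕ} (hy : Odd y) : Odd (y / 3 ^ (y.factorization 3)) := by
  have h := Nat.ordProj_mul_ordCompl_eq_self y 3
  rw [← h] at hy
  exact (Nat.odd_mul.mp hy).2

lemma three_not_dvd_ord_compl {y : ℕ} (hy : y ≠ 0) : ¬ 3 ∣ y / 3 ^ (y.factorization 3) :=
  Nat.not_dvd_ordCompl (by norm_num) hy

lemma f3_sum (y : ℕ) : (f3 y).sum = y := by
  unfold f3
  split
  · rw [Multiset.sum_replicate, smul_eq_mul, Nat.ordProj_mul_ordCompl_eq_self]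
  · simp

lemma sum_bind_f3 (s : Multiset ℕ) : (s.bind f3).sum = s.sum := by
  induction s using Multiset.induction with
  | empty => simp
  | cons a s ih => simp [Multiset.cons_bind, ih, f3_sum]

lemma mem_f3 {y z : ℕ} (hz : z ∈ f3 y) :
    (¬ Odd y ∧ z = y) ∨ (Odd y ∧ z = y / 3 ^ (y.factorization 3)) := by
  unfold f3 at hz
  split at hz
  · right; exact ⟨by assumption, Multiset.eq_of_mem_replicate hz⟩
  · left; exact ⟨by assumption, by simpa using hz⟩

lemma f3_three_mul {y : ℕ} (hy : Odd y) : f3 (3 * y) = f3 y + f3 y + f3 y := by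
  have hy0 : y ≠ 0 := odd_ne_zero hy
  have h3y : Odd (3 * y) := Nat.odd_mul.mpr ⟨⟨1, by norm_num⟩, hy⟩
  have hfact : (3 * y).factorization 3 = y.factorization 3 + 1 := by
    rw [Nat.factorization_mul (by norm_num) hy0]
    simp [Nat.Prime.factorization (by norm_num : Nat.Prime 3), add_comm]
  have hdiv : (3 * y) / 3 ^ ((3 * y).factorization 3) = y / 3 ^ (y.factorization 3) := by
    rw [hfact, pow_succ, mul_comm (3 ^ y.factorization 3) 3, Nat.mul_div_mul_left _ _ (by norm_num)]
  unfold f3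
  rw [if_pos h3y, if_pos hy, hdiv, hfact, pow_succ]
  rw [show 3 ^ y.factorization 3 * 3 = 3 ^ y.factorization 3 + (3 ^ y.factorization 3 +
    3 ^ y.factorization 3) by ring]
  rw [Multiset.replicate_add, Multiset.replicate_add]
  abel

/-- count of an even number in the image. -/
lemma count_f3_even {z y : ℕ} (hz : ¬ Odd z) :
    Multiset.count z (f3 y) = Multiset.count z ({y} : Multiset ℕ) := by
  unfold f3
  split
  · rename_i hy
    rw [Multiset.count_replicate, Multiset.count_singleton]
    have h1 : y / 3 ^ (y.factorization 3) ≠ z := fun h => hz (h ▸ ord_compl_odd hy)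
    have h2 : z ≠ y := fun h => hz (h ▸ hy)
    rw [if_neg h1, if_neg h2]
  · rfl

lemma count_bind_even {z : ℕ} (hz : ¬ Odd z) (s : Multiset ℕ) :
    Multiset.count z (s.bind f3) = Multiset.count z s := by
  induction s using Multiset.induction with
  | empty => simp
  | cons a s ih =>
      rw [Multiset.cons_bind, Multiset.count_add, ih, count_f3_even hz,
        Multiset.count_cons, Multiset.count_singleton]
      omega

lemma count_f3_odd {z y : ℕ} (hz : Odd z) (h3z : ¬ 3 ∣ z) (hy : y ≠ 0) {N : ℕ}
    (hN : y < 3 ^ N) :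
    Multiset.count z (f3 y) = ∑ j ∈ Finset.range N, (if y = z * 3 ^ j then 3 ^ j else 0) := by
  have hz0 : z ≠ 0 := odd_ne_zero hz
  by_cases hyo : Odd y
  · have hx0 : y / 3 ^ (y.factorization 3) ≠ 0 := odd_ne_zero (ord_compl_odd hyo)
    unfold f3
    rw [if_pos hyo, Multiset.count_replicate]
    by_cases hzx : y / 3 ^ (y.factorization 3) = z
    · rw [if_pos hzx]
      have hyzv : y = z * 3 ^ (y.factorization 3) := by
        rw [← hzx, mul_comm, Nat.ordProj_mul_ordCompl_eq_self]
      have hvN : y.factorization 3 < N := by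
        have h1 : 3 ^ (y.factorization 3) ≤ y := by
          conv_rhs => rw [hyzv]
          exact Nat.le_mul_of_pos_left _ (Nat.pos_of_ne_zero hz0)
        have := lt_of_le_of_lt h1 hN
        exact (pow_lt_pow_iff_right₀ (by norm_num : (1:ℕ) < 3)).mp this
      rw [Finset.sum_eq_single (y.factorization 3)]
      · rw [if_pos hyzv]
      · intro j _ hj
        rw [if_neg]
        intro h
        apply hj
        have := hyzv.symm.trans h
        exact (Nat.pow_right_injective (by norm_num : 2 ≤ 3)
          (Nat.eq_of_mul_eq_mul_left (Nat.pos_of_ne_zero hz0) this)).symm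
      · intro h; exact absurd (Finset.mem_range.mpr hvN) h
    · rw [if_neg hzx]
      symm
      apply Finset.sum_eq_zero
      intro j _
      rw [if_neg]
      intro h
      apply hzx
      symm
      have hv : y.factorization 3 = j := by
        rw [h, Nat.factorization_mul hz0 (by positivity),
          Nat.Prime.factorization_pow (by norm_num : Nat.Prime 3)]
        simp [Nat.factorization_eq_zero_of_not_dvd h3z]
      rw [hv, h, Nat.mul_div_cancel _ (by positivity)]
  · unfold f3
    rw [if_neg hyo, Multiset.count_singleton, if_neg (fun h => hyo (show Odd y by rw [← h]; exact hz))]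
    symm
    apply Finset.sum_eq_zero
    intro j _
    rw [if_neg]
    intro h
    exact hyo (by rw [h]; exact Nat.odd_mul.mpr ⟨hz, Odd.pow (⟨1, by norm_num⟩ : Odd (3:ℕ))⟩)

lemma count_bind_odd {z : ℕ} (hz : Odd z) (h3z : ¬ 3 ∣ z) (s : Multiset ℕ)
    (hs : 0 ∉ s) {N : ℕ} (hN : ∀ y ∈ s, y < 3 ^ N) :
    Multiset.count z (s.bind f3) =
      ∑ j ∈ Finset.range N, 3 ^ j * Multiset.count (z * 3 ^ j) s := by
  induction s using Multiset.induction with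
  | empty => simp
  | cons a s ih =>
      have ha0 : a ≠ 0 := fun h => hs (h ▸ Multiset.mem_cons_self a s)
      rw [Multiset.cons_bind, Multiset.count_add,
        count_f3_odd hz h3z ha0 (hN a (Multiset.mem_cons_self a s)),
        ih (fun h => hs (Multiset.mem_cons_of_mem h)) (fun y hy => hN y (Multiset.mem_cons_of_mem hy)),
        ← Finset.sum_add_distrib]
      apply Finset.sum_congr rfl
      intro j _
      rw [Multiset.count_cons]
      by_cases h : a = z * 3 ^ j
      · rw [if_pos h, if_pos h.symm]; ring
      · rw [if_neg h, if_neg (fun hh => h hh.symm)]; ring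

/-- Uniqueness of base-3 representations with digits ≤ 2. -/
lemma base3_unique : ∀ (N : ℕ) (a b : ℕ → ℕ), (∀ j, a j ≤ 2) → (∀ j, b j ≤ 2) →
    (∑ j ∈ Finset.range N, 3 ^ j * a j) = (∑ j ∈ Finset.range N, 3 ^ j * b j) →
    ∀ j < N, a j = b j := by
  intro N
  induction N with
  | zero => intro a b _ _ _ j hj; omega
  | succ N ih =>
      intro a b ha hb hsum j hj
      rw [Finset.sum_range_succ', Finset.sum_range_succ'] at hsum
      simp only [pow_succ, pow_zero, one_mul] at hsum
      have hA : (∑ j ∈ Finset.range N, 3 ^ j * 3 * a (j + 1)) =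
          3 * ∑ j ∈ Finset.range N, 3 ^ j * a (j + 1) := by
        rw [Finset.mul_sum]; apply Finset.sum_congr rfl; intro i _; ring
      have hB : (∑ j ∈ Finset.range N, 3 ^ j * 3 * b (j + 1)) =
          3 * ∑ j ∈ Finset.range N, 3 ^ j * b (j + 1) := by
        rw [Finset.mul_sum]; apply Finset.sum_congr rfl; intro i _; ring
      rw [hA, hB] at hsum
      have h0 : a 0 = b 0 := by
        have := congrArg (· % 3) hsum
        simp only [Nat.add_mul_mod_self_left, Nat.mul_add_mod] at this
        have ha0 := ha 0; have hb0 := hb 0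
        omega
      have htail : (∑ j ∈ Finset.range N, 3 ^ j * a (j + 1)) =
          ∑ j ∈ Finset.range N, 3 ^ j * b (j + 1) := by omega
      rcases Nat.eq_zero_or_pos j with rfl | hjpos
      · exact h0
      · obtain ⟨k, rfl⟩ := Nat.exists_eq_add_of_lt hjpos
        simp only [zero_add]
        exact ih (fun i => a (i + 1)) (fun i => b (i + 1)) (fun i => ha _) (fun i => hb _)
          htail k (by omega)

/-- Injectivity of the bind map on multisets satisfying the multiplicity condition. -/
lemma bind_injective {s t : Multiset ℕ} (hs0 : 0 ∉ s) (ht0 : 0 ∉ t)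
    (hs : ∀ x, Odd x → s.count x ≤ 2) (ht : ∀ x, Odd x → t.count x ≤ 2)
    (h : s.bind f3 = t.bind f3) : s = t := by
  -- choose N large enough
  obtain ⟨N, hN⟩ : ∃ N, (∀ y ∈ s, y < 3 ^ N) ∧ (∀ y ∈ t, y < 3 ^ N) := by
    refine ⟨s.sum + t.sum + 1, fun y hy => ?_, fun y hy => ?_⟩
    · have h1 : y ≤ s.sum := Multiset.le_sum_of_mem hy
      have h2 : s.sum + t.sum + 1 ≤ 3 ^ (s.sum + t.sum + 1) := by
        calc s.sum + t.sum + 1 ≤ 2 ^ (s.sum + t.sum + 1) := Nat.lt_two_pow_self.le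
          _ ≤ 3 ^ (s.sum + t.sum + 1) := Nat.pow_le_pow_left (by norm_num) _
      omega
    · have h1 : y ≤ t.sum := Multiset.le_sum_of_mem hy
      have h2 : s.sum + t.sum + 1 ≤ 3 ^ (s.sum + t.sum + 1) := by
        calc s.sum + t.sum + 1 ≤ 2 ^ (s.sum + t.sum + 1) := Nat.lt_two_pow_self.le
          _ ≤ 3 ^ (s.sum + t.sum + 1) := Nat.pow_le_pow_left (by norm_num) _
      omega
  -- key: counts of odd families agree
  have key : ∀ z, Odd z → ¬ 3 ∣ z → ∀ j, s.count (z * 3 ^ j) = t.count (z * 3 ^ j) := by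
    intro z hz h3z j
    have h1 := count_bind_odd hz h3z s hs0 hN.1
    have h2 := count_bind_odd hz h3z t ht0 hN.2
    rw [h, h2] at h1
    by_cases hj : j < N
    · exact base3_unique N (fun j => s.count (z * 3 ^ j)) (fun j => t.count (z * 3 ^ j))
        (fun j => hs _ (Nat.odd_mul.mpr ⟨hz, Odd.pow (⟨1, by norm_num⟩ : Odd (3:ℕ))⟩))
        (fun j => ht _ (Nat.odd_mul.mpr ⟨hz, Odd.pow (⟨1, by norm_num⟩ : Odd (3:ℕ))⟩)) h1.symm j hj
    · have hzs : s.count (z * 3 ^ j) = 0 := by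
        rw [Multiset.count_eq_zero]
        intro hmem
        have := hN.1 _ hmem
        have h3 : 3 ^ j ≤ z * 3 ^ j := Nat.le_mul_of_pos_left _ (Nat.pos_of_ne_zero (odd_ne_zero hz))
        have h4 : 3 ^ N ≤ 3 ^ j := Nat.pow_le_pow_right (by norm_num) (by omega)
        omega
      have hzt : t.count (z * 3 ^ j) = 0 := by
        rw [Multiset.count_eq_zero]
        intro hmem
        have := hN.2 _ hmem
        have h3 : 3 ^ j ≤ z * 3 ^ j := Nat.le_mul_of_pos_left _ (Nat.pos_of_ne_zero (odd_ne_zero hz))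
        have h4 : 3 ^ N ≤ 3 ^ j := Nat.pow_le_pow_right (by norm_num) (by omega)
        omega
      rw [hzs, hzt]
  ext z
  by_cases hz : Odd z
  · have hz0 : z ≠ 0 := odd_ne_zero hz
    set v := z.factorization 3 with hv
    set z0 := z / 3 ^ v with hz0def
    have hzz : z = z0 * 3 ^ v := by
      rw [hz0def, hv, mul_comm, Nat.ordProj_mul_ordCompl_eq_self]
    have hodd0 : Odd z0 := ord_compl_odd hz
    have h3z0 : ¬ 3 ∣ z0 := three_not_dvd_ord_compl hz0
    rw [hzz]
    exact key z0 hodd0 h3z0 v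
  · rw [← count_bind_even hz s, ← count_bind_even hz t, h]

/-- Surjectivity: every multiset has a "merged" preimage with odd multiplicities ≤ 2. -/
lemma exists_preimage_aux : ∀ (k : ℕ) (s : Multiset ℕ), Multiset.card s ≤ k → 0 ∉ s →
    ∃ t : Multiset ℕ, 0 ∉ t ∧ (∀ x, Odd x → t.count x ≤ 2) ∧ t.bind f3 = s.bind f3 := by
  intro k
  induction k with
  | zero =>
      intro s hcard _
      have : s = 0 := Multiset.card_eq_zero.mp (by omega)
      subst this
      exact ⟨0, by simp, by simp, rfl⟩
  | succ k ih =>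
      intro s hcard hs0
      by_cases h : ∃ x, Odd x ∧ 3 ≤ s.count x
      · obtain ⟨x, hx, hcx⟩ := h
        have hrep : Multiset.replicate 3 x ≤ s := Multiset.le_count_iff_replicate_le.mp hcx
        have hx0 : x ≠ 0 := odd_ne_zero hx
        set s' : Multiset ℕ := (3 * x) ::ₘ (s - Multiset.replicate 3 x) with hs'
        have hsplit : s = Multiset.replicate 3 x + (s - Multiset.replicate 3 x) := by
          rw [add_comm, tsub_add_cancel_of_le hrep]
        have hcard3 : 3 ≤ Multiset.card s := le_trans hcx (Multiset.count_le_card x s)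
        have hcard' : Multiset.card s' ≤ k := by
          rw [hs', Multiset.card_cons, Multiset.card_sub hrep, Multiset.card_replicate]
          omega
        have hs0' : 0 ∉ s' := by
          rw [hs']
          intro hmem
          rcases Multiset.mem_cons.mp hmem with h1 | h1
          · exact (by positivity : (0:ℕ) < 3 * x).ne' h1.symm
          · exact hs0 (Multiset.mem_of_le (tsub_le_self) h1)
        obtain ⟨t, ht0, ht2, htb⟩ := ih s' hcard' hs0'
        refine ⟨t, ht0, ht2, ?_⟩
        rw [htb, hs']
        conv_rhs => rw [hsplit]
        rw [Multiset.cons_bind, Multiset.add_bind, f3_three_mul hx]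
        congr 1
        show f3 x + f3 x + f3 x = (Multiset.replicate 3 x).bind f3
        rw [show (3:ℕ) = 2 + 1 from rfl, Multiset.replicate_succ, Multiset.replicate_succ,
          Multiset.replicate_one, Multiset.cons_bind, Multiset.cons_bind, Multiset.singleton_bind]
        abel
      · push_neg at h
        exact ⟨s, hs0, fun x hx => by have := h x hx; omega, rfl⟩

lemma exists_preimage (s : Multiset ℕ) (hs0 : 0 ∉ s) :
    ∃ t : Multiset ℕ, 0 ∉ t ∧ (∀ x, Odd x → t.count x ≤ 2) ∧ t.bind f3 = s.bind f3 :=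
  exists_preimage_aux (Multiset.card s) s le_rfl hs0

lemma bind_f3_of_no3mod6 (s : Multiset ℕ) (h : ∀ x ∈ s, x % 6 ≠ 3) :
    s.bind f3 = s := by
  induction s using Multiset.induction with
  | empty => simp
  | cons a s ihs =>
      rw [Multiset.cons_bind, ihs (fun x hx => h x (Multiset.mem_cons_of_mem hx))]
      have ha : f3 a = {a} := by
        unfold f3
        split
        · rename_i hodd
          have h3a : ¬ 3 ∣ a := by
            intro hdvd
            apply h a (Multiset.mem_cons_self a s)
            obtain ⟨m, rfl⟩ := hdvd
            have := Nat.odd_iff.mp hodd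
            omega
          rw [Nat.factorization_eq_zero_of_not_dvd h3a, pow_zero, Multiset.replicate_one, Nat.div_one]
        · rfl
      rw [ha, Multiset.singleton_add]

end Glaisher36

theorem noPart3Mod6_eq_oddAtMostTwice (n : ℕ) :
    Fintype.card {p : n.Partition // ∀ x ∈ p.parts, x % 6 ≠ 3} =
      Fintype.card {p : n.Partition // ∀ x ∈ p.parts, Odd x → p.parts.count x ≤ 2} := by
  classical
  symm
  apply Fintype.card_congr
  refine Equiv.ofBijective (fun pp => ?_) ⟨?_, ?_⟩
  · obtain ⟨p, hp⟩ := pp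
    refine ⟨⟨p.parts.bind Glaisher36.f3, ?_, ?_⟩, ?_⟩
    · intro z hz
      obtain ⟨y, hy, hzy⟩ := Multiset.mem_bind.mp hz
      rcases Glaisher36.mem_f3 hzy with ⟨_, rfl⟩ | ⟨hodd, rfl⟩
      · exact p.parts_pos hy
      · exact Nat.pos_of_ne_zero (Glaisher36.odd_ne_zero (Glaisher36.ord_compl_odd hodd))
    · rw [Glaisher36.sum_bind_f3, p.parts_sum]
    · intro z hz hz6
      obtain ⟨y, hy, hzy⟩ := Multiset.mem_bind.mp hz
      have hzodd : z % 2 = 1 := by omega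
      have hz3 : 3 ∣ z := by omega
      rcases Glaisher36.mem_f3 hzy with ⟨heven, rfl⟩ | ⟨hodd, rfl⟩
      · exact heven (Nat.odd_iff.mpr hzodd)
      · exact Glaisher36.three_not_dvd_ord_compl (Glaisher36.odd_ne_zero hodd) hz3
  · rintro ⟨p, hp⟩ ⟨q, hq⟩ h
    have hps : 0 ∉ p.parts := fun h0 => (p.parts_pos h0).ne rfl
    have hqs : 0 ∉ q.parts := fun h0 => (q.parts_pos h0).ne rfl
    have hbind : p.parts.bind Glaisher36.f3 = q.parts.bind Glaisher36.f3 := by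
      have := congrArg (fun x => (x.1 : n.Partition).parts) h
      simpa using this
    have : p.parts = q.parts := Glaisher36.bind_injective hps hqs
      (fun x hx => by
        by_cases hmem : x ∈ p.parts
        · exact hp x hmem hx
        · rw [Multiset.count_eq_zero_of_notMem hmem]; omega)
      (fun x hx => by
        by_cases hmem : x ∈ q.parts
        · exact hq x hmem hx
        · rw [Multiset.count_eq_zero_of_notMem hmem]; omega)
      hbind
    exact Subtype.ext (Nat.Partition.ext this)
  · rintro ⟨q, hq⟩
    have hqs : 0 ∉ q.parts := fun h0 => (q.parts_pos h0).ne rfl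
    obtain ⟨t, ht0, ht2, htb⟩ := Glaisher36.exists_preimage q.parts hqs
    have hfix : q.parts.bind Glaisher36.f3 = q.parts := Glaisher36.bind_f3_of_no3mod6 _ hq
    have htq : t.bind Glaisher36.f3 = q.parts := htb.trans hfix
    refine ⟨⟨⟨t, fun hi => Nat.pos_of_ne_zero (fun h0 => ht0 (h0 ▸ hi)), ?_⟩, ?_⟩, ?_⟩
    · rw [← Glaisher36.sum_bind_f3, htq, q.parts_sum]
    · intro x _ hx
      exact ht2 x hx
    · exact Subtype.ext (Nat.Partition.ext htq)
end

section
/- The eta-quotient identity (f_2^2 f_3 f_12)/(f_1 f_4 f_6) = ∑_{k=-∞}^{∞} q^{3k^2+2k} holds as formal power series. -/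
open PowerSeries

/-- `f r` is the formal power series `∏_{i ≥ 1} (1 - q^(r·i))`; its `n`-th coefficient
agrees with that of the partial product up to `i = n + 1`. -/
noncomputable def f (r : ℕ) : PowerSeries ℚ :=
  PowerSeries.mk fun n =>
    PowerSeries.coeff n
      (∏ i ∈ Finset.range (n + 1), (1 - (PowerSeries.X : PowerSeries ℚ) ^ (r * (i + 1))))

/-- `a n` is the number of partitions of `n` with no part congruent to 3 mod 6. -/
def a (n : ℕ) : ℕ := Fintype.card {p : n.Partition // ∀ x ∈ p.parts, x % 6 ≠ 3}

namespace EtaQT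
open Finset
noncomputable section

abbrev PS := PowerSeries ℚ

/-- congruence mod X^n -/
def ME (n : ℕ) (A B : PS) : Prop := (X : PS) ^ n ∣ A - B

lemma ME.rfl {n : ℕ} {A : PS} : ME n A A := by simp [ME]

lemma ME.symm {n : ℕ} {A B : PS} (h : ME n A B) : ME n B A := by
  rw [ME, ← neg_sub A B]; exact dvd_neg.mpr h

lemma ME.trans {n : ℕ} {A B C : PS} (h1 : ME n A B) (h2 : ME n B C) : ME n A C := by
  have : A - C = (A - B) + (B - C) := by ring
  rw [ME, this]; exact dvd_add h1 h2

lemma ME.add {n : ℕ} {A B C D : PS} (h1 : ME n A B) (h2 : ME n C D) :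
    ME n (A + C) (B + D) := by
  have : A + C - (B + D) = (A - B) + (C - D) := by ring
  rw [ME, this]; exact dvd_add h1 h2

lemma ME.mul {n : ℕ} {A B C D : PS} (h1 : ME n A B) (h2 : ME n C D) :
    ME n (A * C) (B * D) := by
  have : A * C - B * D = (A - B) * C + B * (C - D) := by ring
  rw [ME, this]; exact dvd_add (h1.mul_right C) (h2.mul_left B)

lemma ME.prod {n : ℕ} {ι : Type*} {s : Finset ι} {F G : ι → PS}
    (h : ∀ i ∈ s, ME n (F i) (G i)) :
    ME n (∏ i ∈ s, F i) (∏ i ∈ s, G i) := by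
  classical
  induction s using Finset.induction with
  | empty => simpa using ME.rfl
  | @insert x s hx ih =>
    rw [prod_insert hx, prod_insert hx]
    exact (h _ (mem_insert_self _ _)).mul (ih fun i hi => h i (mem_insert_of_mem hi))

lemma ME.sum {n : ℕ} {ι : Type*} {s : Finset ι} {F G : ι → PS}
    (h : ∀ i ∈ s, ME n (F i) (G i)) :
    ME n (∑ i ∈ s, F i) (∑ i ∈ s, G i) := by
  classical
  induction s using Finset.induction with
  | empty => simpa using ME.rfl
  | @insert x s hx ih =>
    rw [sum_insert hx, sum_insert hx]
    exact (h _ (mem_insert_self _ _)).add (ih fun i hi => h i (mem_insert_of_mem hi))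

lemma ME.coeff_eq {n : ℕ} {A B : PS} (h : ME n A B) {k : ℕ} (hk : k < n) :
    coeff k A = coeff k B := by
  have := PowerSeries.X_pow_dvd_iff.mp h k hk
  rw [map_sub, sub_eq_zero] at this
  exact this

lemma ME.of_coeff {n : ℕ} {A B : PS} (h : ∀ k < n, coeff k A = coeff k B) :
    ME n A B := by
  refine PowerSeries.X_pow_dvd_iff.mpr fun m hm => ?_
  rw [map_sub, sub_eq_zero]; exact h m hm

lemma ME.cancel {n : ℕ} {U A B : PS} (hU : IsUnit U) (h : ME n (U * A) (U * B)) :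
    ME n A B := by
  obtain ⟨V, hV⟩ := hU.exists_left_inv
  have e : A - B = V * (U * A - U * B) := by
    have : V * (U * A - U * B) = (V * U) * A - (V * U) * B := by ring
    rw [this, hV, one_mul, one_mul]
  rw [ME, e]; exact h.mul_left V

lemma ME.mono {m n : ℕ} {A B : PS} (hmn : m ≤ n) (h : ME n A B) : ME m A B :=
  dvd_trans (pow_dvd_pow _ hmn) h

lemma ME.X_pow_zero {n e : ℕ} (h : n ≤ e) (A : PS) : ME n ((X : PS) ^ e * A) 0 := by
  rw [ME, sub_zero]; exact (pow_dvd_pow (X : PS) h).mul_right A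

lemma ME.one_sub {n e : ℕ} (h : n ≤ e) : ME n (1 - (X : PS) ^ e) 1 := by
  rw [ME]
  have : 1 - (X : PS) ^ e - 1 = -(X ^ e) := by ring
  rw [this]; exact dvd_neg.mpr (pow_dvd_pow _ h)

lemma ME.one_add {n e : ℕ} (h : n ≤ e) : ME n (1 + (X : PS) ^ e) 1 := by
  rw [ME]
  have : 1 + (X : PS) ^ e - 1 = X ^ e := by ring
  rw [this]; exact pow_dvd_pow _ h

lemma isUnit_one_sub_X_pow (e : ℕ) (he : 0 < e) : IsUnit (1 - (X : PS) ^ e) := by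
  rw [PowerSeries.isUnit_iff_constantCoeff]
  have : constantCoeff (1 - (X : PS) ^ e) = 1 := by
    rw [map_sub, map_one, map_pow, constantCoeff_X, zero_pow he.ne', sub_zero]
  rw [this]; exact isUnit_one

lemma isUnit_one_add_X_pow (e : ℕ) (he : 0 < e) : IsUnit (1 + (X : PS) ^ e) := by
  rw [PowerSeries.isUnit_iff_constantCoeff]
  have : constantCoeff (1 + (X : PS) ^ e) = 1 := by
    rw [map_add, map_one, map_pow, constantCoeff_X, zero_pow he.ne', add_zero]
  rw [this]; exact isUnit_one


lemma unit_cancel_left {U A B : PS} (hU : IsUnit U) (h : U * A = U * B) : A = B := by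
  obtain ⟨V, hV⟩ := hU.exists_left_inv
  calc A = (V * U) * A := by rw [hV, one_mul]
    _ = V * (U * B) := by rw [mul_assoc, h]
    _ = (V * U) * B := by rw [mul_assoc]
    _ = B := by rw [hV, one_mul]

end
end EtaQT

namespace EtaQT
noncomputable section

/-- partial product of (1 - q^{6j}) -/
def D (m : ℕ) : PS := ∏ j ∈ Finset.range m, (1 - (X : PS) ^ (6 * (j + 1)))

/-- Gaussian binomial `[n, k]` in the variable q^6, defined by Pascal recursion. -/
def B : ℕ → ℕ → PS
  | 0, 0 => 1
  | 0, _ + 1 => 0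
  | n + 1, 0 => 1
  | n + 1, k + 1 => B n (k + 1) + (X : PS) ^ (6 * (n - k)) * B n k

lemma B_zero_right (n : ℕ) : B n 0 = 1 := by cases n <;> rfl

lemma B_succ (n k : ℕ) : B (n + 1) (k + 1) = B n (k + 1) + (X : PS) ^ (6 * (n - k)) * B n k :=
  rfl

lemma B_eq_zero : ∀ n k : ℕ, n < k → B n k = 0 := by
  intro n
  induction n with
  | zero => intro k hk; match k, hk with | k + 1, _ => rfl
  | succ n ih =>
    intro k hk
    match k, hk with
    | k + 1, hk =>
      rw [B_succ, ih (k + 1) (by omega), ih k (by omega), mul_zero, add_zero]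

lemma B_diag : ∀ n : ℕ, B n n = 1 := by
  intro n
  induction n with
  | zero => rfl
  | succ n ih =>
    rw [B_succ, B_eq_zero n (n + 1) (by omega), ih, Nat.sub_self, mul_zero, pow_zero,
      one_mul, zero_add]

lemma D_zero : D 0 = 1 := rfl

lemma D_succ (m : ℕ) : D (m + 1) = D m * (1 - (X : PS) ^ (6 * (m + 1))) :=
  Finset.prod_range_succ _ _

lemma D_unit (m : ℕ) : IsUnit (D m) := by
  induction m with
  | zero => exact isUnit_one
  | succ m ih => rw [D_succ]; exact ih.mul (isUnit_one_sub_X_pow _ (by omega))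

lemma R4 : ∀ n k : ℕ, k ≤ n → B n k * D k * D (n - k) = D n := by
  intro n
  induction n with
  | zero => intro k hk; interval_cases k; simp [B, D_zero]
  | succ n ih =>
    intro k hk
    match k with
    | 0 => simp [B_zero_right, D_zero]
    | k + 1 =>
      rcases Nat.lt_or_ge k n with hkn | hkn
      · obtain ⟨a, rfl⟩ : ∃ a, n = k + 1 + a := ⟨n - (k + 1), by omega⟩
        have h1 : k + 1 + a + 1 - (k + 1) = a + 1 := by omega
        have h2 : k + 1 + a - k = a + 1 := by omega
        have h3 : k + 1 + a - (k + 1) = a := by omega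
        have H1 := ih (k + 1) (by omega)
        have H2 := ih k (by omega)
        rw [h3] at H1; rw [h2] at H2
        rw [h1, B_succ, h2, D_succ a, D_succ k, D_succ (k + 1 + a)]
        rw [D_succ k] at H1; rw [D_succ a] at H2
        have P : (X : PS) ^ (6 * (a + 1)) * (X : PS) ^ (6 * (k + 1)) =
            (X : PS) ^ (6 * (k + 1 + a + 1)) := by
          rw [← pow_add]; congr 1; ring
        linear_combination (1 - (X : PS) ^ (6 * (a + 1))) * H1 +
          (X : PS) ^ (6 * (a + 1)) * (1 - (X : PS) ^ (6 * (k + 1))) * H2 - D (k + 1 + a) * P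
      · have hk1 : k + 1 = n + 1 := by omega
        rw [hk1, B_diag, Nat.sub_self, D_zero, one_mul, mul_one]

/-- the key quotient relation -/
lemma E_rel (n k : ℕ) :
    (1 - (X : PS) ^ (6 * (k + 1))) * B n (k + 1) = (1 - (X : PS) ^ (6 * (n - k))) * B n k := by
  rcases Nat.lt_or_ge k n with hkn | hkn
  · obtain ⟨a, rfl⟩ : ∃ a, n = k + 1 + a := ⟨n - (k + 1), by omega⟩
    have h2 : k + 1 + a - k = a + 1 := by omega
    have h3 : k + 1 + a - (k + 1) = a := by omega
    rw [h2]
    have H1 := R4 (k + 1 + a) (k + 1) (by omega)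
    have H2 := R4 (k + 1 + a) k (by omega)
    rw [h3] at H1; rw [h2] at H2
    -- multiply goal by unit W := D k * D a
    have hW : IsUnit (D k * D a) := (D_unit k).mul (D_unit a)
    have key : (D k * D a) * ((1 - (X : PS) ^ (6 * (k + 1))) * B (k + 1 + a) (k + 1)) =
        (D k * D a) * ((1 - (X : PS) ^ (6 * (a + 1))) * B (k + 1 + a) k) := by
      rw [D_succ k] at H1
      rw [D_succ a] at H2
      linear_combination H1 - H2
    exact unit_cancel_left hW key
  · rcases Nat.eq_or_lt_of_le hkn with rfl | hlt
    · rw [B_eq_zero n (n + 1) (by omega), Nat.sub_self, mul_zero, pow_zero, sub_self, zero_mul]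
    · rw [B_eq_zero n (k + 1) (by omega), B_eq_zero n k (by omega), mul_zero, mul_zero]

/-- second Pascal rule -/
lemma B_succ' (n k : ℕ) :
    B (n + 1) (k + 1) = (X : PS) ^ (6 * (k + 1)) * B n (k + 1) + B n k := by
  have h := E_rel n k
  rw [B_succ]
  rcases Nat.lt_or_ge k n with hkn | hkn
  · linear_combination h
  · rcases Nat.eq_or_lt_of_le hkn with rfl | hlt
    · rw [B_eq_zero n (n + 1) (by omega), Nat.sub_self, mul_zero, pow_zero, mul_zero]
      rw [zero_add, zero_add, one_mul]
    · rw [B_eq_zero n (k + 1) (by omega), B_eq_zero n k (by omega)]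
      simp

/-- the three-term expansion used in the induction step of the finite triple product -/
lemma star (N j : ℕ) :
    B (2 * N + 2) (j + 2) =
      (X : PS) ^ (6 * (j + 2)) * B (2 * N) (j + 2) +
        (1 + (X : PS) ^ (6 * (2 * N + 1))) * B (2 * N) (j + 1) +
        (X : PS) ^ (6 * (2 * N - j)) * B (2 * N) j := by
  rcases Nat.lt_or_ge (2 * N) j with hj | hj
  · rw [B_eq_zero (2 * N + 2) (j + 2) (by omega), B_eq_zero (2 * N) (j + 2) (by omega),
      B_eq_zero (2 * N) (j + 1) (by omega), B_eq_zero (2 * N) j (by omega)]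
    simp
  · -- j ≤ 2N
    have hA1 : B (2 * N + 2) (j + 2) =
        B (2 * N + 1) (j + 2) + (X : PS) ^ (6 * (2 * N - j)) * B (2 * N + 1) (j + 1) := by
      have := B_succ (2 * N + 1) (j + 1)
      rwa [show 2 * N + 1 - (j + 1) = 2 * N - j by omega] at this
    have hB : B (2 * N + 1) (j + 2) =
        (X : PS) ^ (6 * (j + 2)) * B (2 * N) (j + 2) + B (2 * N) (j + 1) := B_succ' (2 * N) (j + 1)
    have hA2 : B (2 * N + 1) (j + 1) =
        B (2 * N) (j + 1) + (X : PS) ^ (6 * (2 * N - j)) * B (2 * N) j := B_succ (2 * N) j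
    have hE := E_rel (2 * N) j
    have P1 : (X : PS) ^ (6 * (2 * N - j)) * (X : PS) ^ (6 * (j + 1)) =
        (X : PS) ^ (6 * (2 * N + 1)) := by
      rw [← pow_add]; congr 1; omega
    have P2 : (X : PS) ^ (6 * (2 * N - j)) * (X : PS) ^ (6 * (2 * N - j)) =
        (X : PS) ^ (6 * (2 * N - j) + 6 * (2 * N - j)) := by rw [← pow_add]
    linear_combination hA1 + hB + (X : PS) ^ (6 * (2 * N - j)) * hA2 +
      (X : PS) ^ (6 * (2 * N - j)) * hE + B (2 * N) (j + 1) * P1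
end
end EtaQT
namespace EtaQT
noncomputable section

def qd (k : ℤ) : ℤ := 3 * k ^ 2 + 2 * k

lemma qd_nonneg (k : ℤ) : 0 ≤ qd k := by
  have h : 0 ≤ 3 * (3 * k ^ 2 + 2 * k) + 1 := by nlinarith [sq_nonneg (3 * k + 1)]
  unfold qd; omega

/-- exponent of the `i`-th theta term at level `N` (centered at `i = N`). -/
def ee (N i : ℕ) : ℕ := (qd ((i : ℤ) - N)).toNat

lemma ee_cast (N i : ℕ) : (ee N i : ℤ) = qd ((i : ℤ) - N) := Int.toNat_of_nonneg (qd_nonneg _)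

lemma L1 (N i : ℕ) : ee (N + 1) i + 6 * i = ee N i + (6 * N + 1) := by
  have : ((ee (N + 1) i + 6 * i : ℕ) : ℤ) = ((ee N i + (6 * N + 1) : ℕ) : ℤ) := by
    push_cast [ee_cast]; unfold qd; ring
  exact_mod_cast this

lemma L2 (N j : ℕ) : ee (N + 1) (j + 1) = ee N j := by
  have : ((ee (N + 1) (j + 1) : ℕ) : ℤ) = ((ee N j : ℕ) : ℤ) := by
    push_cast [ee_cast]; unfold qd; ring
  exact_mod_cast this

lemma L3 (N j : ℕ) (hj : j ≤ 2 * N) :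
    ee (N + 1) (j + 2) + 6 * (2 * N - j) = ee N j + (6 * N + 5) := by
  have : ((ee (N + 1) (j + 2) + 6 * (2 * N - j) : ℕ) : ℤ) = ((ee N j + (6 * N + 5) : ℕ) : ℤ) := by
    push_cast [ee_cast, Nat.cast_sub hj]
    unfold qd; ring
  exact_mod_cast this

lemma L4 (N : ℕ) : 6 * N + 1 + ee N 1 = ee N 0 + 6 := by
  have : ((6 * N + 1 + ee N 1 : ℕ) : ℤ) = ((ee N 0 + 6 : ℕ) : ℤ) := by
    push_cast [ee_cast]; unfold qd; ring
  exact_mod_cast this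

/-- summand of the theta-side partial sum -/
def hh (N i : ℕ) : PS := (X : PS) ^ (ee N i) * B (2 * N) i

/-- theta-side partial sum -/
def SS (N : ℕ) : PS := ∑ i ∈ Finset.range (2 * N + 1), hh N i

lemma B_one_expand (N : ℕ) :
    B (2 * N + 2) 1 = (X : PS) ^ 6 * B (2 * N) 1 + (1 + (X : PS) ^ (6 * (2 * N + 1))) := by
  have e1 := B_succ (2 * N + 1) 0
  have e2 := B_succ (2 * N) 0
  have hE := E_rel (2 * N) 0
  simp only [Nat.sub_zero, B_zero_right, zero_add, mul_one] at e1 e2 hE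
  norm_num at e1 e2 hE
  linear_combination e1 + e2 + hE

/-- term-wise expansion in the induction step -/
lemma hterm (N j : ℕ) (hj : j ≤ 2 * N) :
    (X : PS) ^ (ee (N + 1) (j + 2)) * B (2 * N + 2) (j + 2) =
      (X : PS) ^ (6 * N + 1) * hh N (j + 2) +
        (1 + (X : PS) ^ (6 * (2 * N + 1))) * hh N (j + 1) +
        (X : PS) ^ (6 * N + 5) * hh N j := by
  have p1 : (X : PS) ^ (ee (N + 1) (j + 2)) * (X : PS) ^ (6 * (j + 2)) =
      (X : PS) ^ (6 * N + 1) * (X : PS) ^ (ee N (j + 2)) := by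
    rw [← pow_add, ← pow_add]; congr 1
    have := L1 (N) (j + 2); omega
  have p2 : (X : PS) ^ (ee (N + 1) (j + 2)) = (X : PS) ^ (ee N (j + 1)) := by
    rw [L2 N (j + 1)]
  have p3 : (X : PS) ^ (ee (N + 1) (j + 2)) * (X : PS) ^ (6 * (2 * N - j)) =
      (X : PS) ^ (6 * N + 5) * (X : PS) ^ (ee N j) := by
    rw [← pow_add, ← pow_add]; congr 1
    have := L3 N j hj; omega
  rw [star N j]
  unfold hh
  linear_combination B (2 * N) (j + 2) * p1 +
    (1 + (X : PS) ^ (6 * (2 * N + 1))) * B (2 * N) (j + 1) * p2 + B (2 * N) j * p3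

lemma MFI (N : ℕ) :
    ∏ j ∈ Finset.range N, ((1 + (X : PS) ^ (6 * j + 1)) * (1 + (X : PS) ^ (6 * j + 5))) =
      SS N := by
  induction N with
  | zero =>
    simp [SS, hh, ee, qd, B]
  | succ N ih =>
    rw [Finset.prod_range_succ, ih]
    have hrange : 2 * (N + 1) + 1 = (2 * N + 2) + 1 := by ring
    unfold SS
    rw [hrange]
    rw [Finset.sum_range_succ' (fun i => hh (N + 1) i) (2 * N + 2)]
    rw [Finset.sum_range_succ' (fun i => hh (N + 1) (i + 1)) (2 * N + 1)]
    -- now: SS N * ((1+X^{6N+1})(1+X^{6N+5})) = (∑_{j<2N+1} hh (N+1) (j+2) + hh (N+1) 1) + hh (N+1) 0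
    have hBN : 2 * (N + 1) = 2 * N + 2 := by ring
    have hh2 : ∀ j ∈ Finset.range (2 * N + 1), hh (N + 1) (j + 2) =
        (X : PS) ^ (6 * N + 1) * hh N (j + 2) +
          (1 + (X : PS) ^ (6 * (2 * N + 1))) * hh N (j + 1) +
          (X : PS) ^ (6 * N + 5) * hh N j := by
      intro j hj
      have hj' : j ≤ 2 * N := by
        have := Finset.mem_range.mp hj; omega
      have := hterm N j hj'
      unfold hh
      rw [hBN]
      exact this
    rw [Finset.sum_congr rfl hh2]
    rw [Finset.sum_add_distrib, Finset.sum_add_distrib, ← Finset.mul_sum, ← Finset.mul_sum,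
      ← Finset.mul_sum]
    -- shifted sum identities
    have hs1 : ∑ j ∈ Finset.range (2 * N + 1), hh N (j + 1) = SS N - hh N 0 := by
      have h1 : ∑ i ∈ Finset.range (2 * N + 2), hh N i =
          (∑ j ∈ Finset.range (2 * N + 1), hh N (j + 1)) + hh N 0 :=
        Finset.sum_range_succ' (hh N) (2 * N + 1)
      have h2 : ∑ i ∈ Finset.range (2 * N + 2), hh N i = SS N + hh N (2 * N + 1) :=
        Finset.sum_range_succ (hh N) (2 * N + 1)
      have h3 : hh N (2 * N + 1) = 0 := by
        unfold hh; rw [B_eq_zero (2 * N) (2 * N + 1) (by omega), mul_zero]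
      rw [h3, add_zero] at h2
      rw [h2] at h1
      linear_combination -h1
    have hs2 : ∑ j ∈ Finset.range (2 * N + 1), hh N (j + 2) = SS N - hh N 1 - hh N 0 := by
      have h1 : ∑ i ∈ Finset.range (2 * N + 3), hh N i =
          (∑ j ∈ Finset.range (2 * N + 2), hh N (j + 1)) + hh N 0 :=
        Finset.sum_range_succ' (hh N) (2 * N + 2)
      have h1b : ∑ j ∈ Finset.range (2 * N + 2), hh N (j + 1) =
          (∑ j ∈ Finset.range (2 * N + 1), hh N (j + 2)) + hh N 1 :=
        Finset.sum_range_succ' (fun j => hh N (j + 1)) (2 * N + 1)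
      have h2 : ∑ i ∈ Finset.range (2 * N + 3), hh N i = SS N := by
        rw [Finset.sum_range_succ, Finset.sum_range_succ]
        have h3 : hh N (2 * N + 1) = 0 := by
          unfold hh; rw [B_eq_zero (2 * N) (2 * N + 1) (by omega), mul_zero]
        have h4 : hh N (2 * N + 2) = 0 := by
          unfold hh; rw [B_eq_zero (2 * N) (2 * N + 2) (by omega), mul_zero]
        rw [h3, h4, add_zero, add_zero]
        rfl
      rw [h1b] at h1
      rw [h2] at h1
      linear_combination -h1
    rw [hs1, hs2]
    -- boundary terms
    have hT1 : hh (N + 1) 1 = (X : PS) ^ (6 * N + 1) * hh N 1 +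
        (1 + (X : PS) ^ (6 * (2 * N + 1))) * hh N 0 := by
      unfold hh
      rw [hBN, B_one_expand, L2 N 0]
      have pe : (X : PS) ^ (ee N 0) * (X : PS) ^ 6 =
          (X : PS) ^ (6 * N + 1) * (X : PS) ^ (ee N 1) := by
        rw [← pow_add, ← pow_add]; congr 1
        have := L4 N; omega
      rw [B_zero_right]
      linear_combination B (2 * N) 1 * pe
    have hT0 : hh (N + 1) 0 = (X : PS) ^ (6 * N + 1) * hh N 0 := by
      unfold hh
      rw [hBN, B_zero_right, B_zero_right, mul_one, mul_one, ← pow_add]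
      congr 1
      have := L1 N 0; omega
    rw [hT1, hT0]
    have hSS : SS N = ∑ i ∈ Finset.range (2 * N + 1), hh N i := rfl
    rw [← hSS]
    have P : (X : PS) ^ (6 * N + 1) * (X : PS) ^ (6 * N + 5) = (X : PS) ^ (6 * (2 * N + 1)) := by
      rw [← pow_add]; congr 1; ring
    linear_combination (SS N) * P

end
end EtaQT
namespace EtaQT
noncomputable section
open Finset

def NEG (s : Finset ℕ) : PS := ∏ m ∈ s, (1 - (X : PS) ^ m)
def POS (s : Finset ℕ) : PS := ∏ m ∈ s, (1 + (X : PS) ^ m)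

/-- multiples of r in [1, n] -/
def M (n r : ℕ) : Finset ℕ := (Finset.Icc 1 n).filter (fun m => r ∣ m)
/-- residue class j mod 6 in [1, n] -/
def A (n j : ℕ) : Finset ℕ := (Finset.Icc 1 n).filter (fun m => m % 6 = j)

lemma prod_ME_one (n : ℕ) (s : Finset ℕ) (F : ℕ → PS) (h : ∀ m ∈ s, ME (n + 1) (F m) 1) :
    ME (n + 1) (∏ m ∈ s, F m) 1 := by
  have := ME.prod h
  simpa using this

lemma trunc_prod (n : ℕ) (s : Finset ℕ) (F : ℕ → PS)
    (h : ∀ m ∈ s, ¬ m ≤ n → ME (n + 1) (F m) 1) :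
    ME (n + 1) (∏ m ∈ s, F m) (∏ m ∈ s.filter (fun m => m ≤ n), F m) := by
  rw [← Finset.prod_filter_mul_prod_filter_not s (fun m => m ≤ n) F]
  have h1 : ME (n + 1) (∏ m ∈ s.filter (fun m => ¬ m ≤ n), F m) 1 := by
    refine prod_ME_one n _ _ fun m hm => ?_
    rw [Finset.mem_filter] at hm
    exact h m hm.1 hm.2
  have h2 := (ME.rfl (A := ∏ m ∈ s.filter (fun m => m ≤ n), F m)).mul h1
  rw [mul_one] at h2
  exact h2

lemma NEG_trunc (n : ℕ) (s : Finset ℕ) :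
    ME (n + 1) (NEG s) (NEG (s.filter (fun m => m ≤ n))) :=
  trunc_prod n s _ fun m _ hm => ME.one_sub (by omega)

lemma POS_trunc (n : ℕ) (s : Finset ℕ) :
    ME (n + 1) (POS s) (POS (s.filter (fun m => m ≤ n))) :=
  trunc_prod n s _ fun m _ hm => ME.one_add (by omega)

/-- partial product defining `f r` -/
def Pr (N r : ℕ) : PS := ∏ i ∈ Finset.range N, (1 - (X : PS) ^ (r * (i + 1)))

lemma Pr_stable (r : ℕ) (hr : 1 ≤ r) {M' N' : ℕ} (hMN : M' ≤ N') {n : ℕ} (hM : n ≤ M') :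
    ME (n + 1) (Pr N' r) (Pr M' r) := by
  obtain ⟨c, rfl⟩ : ∃ c, N' = M' + c := ⟨N' - M', by omega⟩
  unfold Pr
  rw [Finset.prod_range_add]
  have h1 : ME (n + 1) (∏ i ∈ Finset.range c, (1 - (X : PS) ^ (r * (M' + i + 1)))) 1 := by
    refine prod_ME_one n _ _ fun m _ => ME.one_sub ?_
    have : M' + 1 ≤ r * (M' + m + 1) := by nlinarith
    omega
  have h2 := (ME.rfl (A := ∏ i ∈ Finset.range M', (1 - (X : PS) ^ (r * (i + 1))))).mul h1
  rw [mul_one] at h2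
  exact h2

lemma coeff_f (r n : ℕ) : (coeff n) (f r) = (coeff n) (Pr (n + 1) r) := by
  simp [f, Pr, coeff_mk]

lemma f_ME (r : ℕ) (hr : 1 ≤ r) {n N : ℕ} (hN : n + 1 ≤ N) : ME (n + 1) (f r) (Pr N r) := by
  refine ME.of_coeff fun k hk => ?_
  rw [coeff_f]
  have h1 : ME (k + 1) (Pr N r) (Pr (k + 1) r) := Pr_stable r hr (by omega) (by omega)
  exact (h1.coeff_eq (by omega)).symm

lemma Pr_eq_NEG (N r : ℕ) (hr : 1 ≤ r) :
    Pr N r = NEG ((Finset.range N).image (fun i => r * (i + 1))) := by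
  unfold Pr NEG
  rw [Finset.prod_image]
  intro a _ b _ hab
  have : a + 1 = b + 1 := by
    have := hab
    exact Nat.eq_of_mul_eq_mul_left (by omega) this
  omega

lemma image_filter_eq_M (N r n : ℕ) (hr : 1 ≤ r) (hN : n ≤ N) :
    (((Finset.range N).image (fun i => r * (i + 1))).filter (fun m => m ≤ n)) = M n r := by
  ext m
  simp only [M, Finset.mem_filter, Finset.mem_image, Finset.mem_range, Finset.mem_Icc]
  constructor
  · rintro ⟨⟨i, hi, rfl⟩, hle⟩
    exact ⟨⟨by nlinarith, hle⟩, ⟨i + 1, by ring⟩⟩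
  · rintro ⟨⟨h1, h2⟩, c, rfl⟩
    have hc : 1 ≤ c := by nlinarith
    have hcN : c - 1 < N := by
      have : c ≤ r * c := Nat.le_mul_of_pos_left c (by omega)
      omega
    exact ⟨⟨c - 1, hcN, by rw [Nat.sub_add_cancel hc]⟩, h2⟩

lemma f_ME_M (r : ℕ) (hr : 1 ≤ r) {n N : ℕ} (hN : n + 1 ≤ N) :
    ME (n + 1) (f r) (NEG (M n r)) := by
  have h1 := f_ME r hr (n := n) (N := N) hN
  rw [Pr_eq_NEG N r hr] at h1
  have h2 := NEG_trunc n ((Finset.range N).image (fun i => r * (i + 1)))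
  rw [image_filter_eq_M N r n hr (by omega)] at h2
  exact h1.trans h2

end
end EtaQT
namespace EtaQT
noncomputable section
open Finset

def TH (N : ℕ) : PS := ∑ i ∈ Finset.range (2 * N + 1), (X : PS) ^ (ee N i)

def theta : PS := PowerSeries.mk fun n => (Set.ncard {k : ℤ | 3 * k ^ 2 + 2 * k = (n : ℤ)} : ℚ)

lemma qd_inj {a b : ℤ} (h : qd a = qd b) : a = b := by
  have h3 : (a - b) * (3 * (a + b) + 2) = 0 := by unfold qd at h; linear_combination h
  rcases mul_eq_zero.mp h3 with h | h
  · omega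
  · omega

lemma qd_ge_sq (k : ℤ) : k ^ 2 ≤ qd k := by
  unfold qd
  rcases le_or_gt 0 k with h | h
  · nlinarith
  · have := mul_nonneg (by omega : (0:ℤ) ≤ -k) (by omega : (0:ℤ) ≤ -(k+1))
    nlinarith

lemma sq_le_bound {k : ℤ} {n : ℕ} (h : k ^ 2 ≤ (n : ℤ)) : -(n:ℤ) ≤ k ∧ k ≤ n := by
  constructor
  · nlinarith [sq_nonneg (k + 1)]
  · nlinarith [sq_nonneg (k - 1)]

lemma theta_ME (n N : ℕ) (hN : n ≤ N) : ME (n + 1) theta (TH N) := by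
  refine ME.of_coeff fun k hk => ?_
  have hcl : (coeff k) theta = (Set.ncard {z : ℤ | 3 * z ^ 2 + 2 * z = (k : ℤ)} : ℚ) := by
    simp [theta, coeff_mk]
  have hcr : (coeff k) (TH N) =
      ∑ i ∈ Finset.range (2 * N + 1), (if ee N i = k then (1 : ℚ) else 0) := by
    unfold TH
    rw [map_sum]
    refine Finset.sum_congr rfl fun i _ => ?_
    rw [PowerSeries.coeff_X_pow]
    simp [eq_comm]
  rw [hcl, hcr]
  by_cases hex : ∃ z : ℤ, qd z = (k : ℤ)
  · obtain ⟨z, hz⟩ := hex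
    have hzsq : z ^ 2 ≤ (k : ℤ) := by rw [← hz]; exact qd_ge_sq z
    have hzb : -(k:ℤ) ≤ z ∧ z ≤ k := sq_le_bound hzsq
    have hkn : k ≤ n := by omega
    have hzN : -(N:ℤ) ≤ z ∧ z ≤ N := by
      constructor <;> [push_cast; push_cast] <;> omega
    -- the set is {z}
    have hset : {w : ℤ | 3 * w ^ 2 + 2 * w = (k : ℤ)} = {z} := by
      ext w
      simp only [Set.mem_setOf_eq, Set.mem_singleton_iff]
      constructor
      · intro hw
        refine qd_inj (a := w) (b := z) ?_
        have hz' := hz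
        unfold qd at hz' ⊢
        rw [hw, ← hz']
      · rintro rfl
        unfold qd at hz; linarith
    rw [hset, Set.ncard_singleton]
    -- the filter is {i0}
    set i0 : ℕ := (z + N).toNat with hi0
    have hi0c : (i0 : ℤ) = z + N := Int.toNat_of_nonneg (by omega)
    have hfil : (Finset.range (2 * N + 1)).filter (fun i => ee N i = k) = {i0} := by
      ext i
      simp only [Finset.mem_filter, Finset.mem_range, Finset.mem_singleton]
      constructor
      · rintro ⟨hi, he⟩
        have hqe : qd ((i : ℤ) - N) = (k : ℤ) := by
          rw [← ee_cast N i, he]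
        have := qd_inj (hqe.trans hz.symm)
        omega
      · rintro rfl
        have h1 : qd ((i0 : ℤ) - N) = (k : ℤ) := by rw [hi0c]; simpa using hz
        have h2 : ee N i0 = k := by
          have := ee_cast N i0
          rw [h1] at this
          exact_mod_cast this
        have h3 : i0 < 2 * N + 1 := by omega
        exact ⟨h3, h2⟩
    rw [Finset.sum_boole]
    rw [hfil]
    simp
  · have hset : {w : ℤ | 3 * w ^ 2 + 2 * w = (k : ℤ)} = ∅ := by
      ext w
      simp only [Set.mem_setOf_eq, Set.mem_empty_iff_false, iff_false]
      intro hw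
      exact hex ⟨w, by unfold qd; linarith⟩
    rw [hset, Set.ncard_empty]
    rw [Finset.sum_eq_zero]
    · simp
    · intro i _
      rw [if_neg]
      intro he
      refine hex ⟨(i : ℤ) - N, ?_⟩
      rw [← ee_cast N i, he]
end
end EtaQT
namespace EtaQT
noncomputable section
open Finset

lemma D_eq_Pr (m : ℕ) : D m = Pr m 6 := rfl

lemma D_stable (n : ℕ) {m m' : ℕ} (h : m ≤ m') (hm : n + 1 ≤ 6 * (m + 1)) :
    ME (n + 1) (D m') (D m) := by
  obtain ⟨c, rfl⟩ : ∃ c, m' = m + c := ⟨m' - m, by omega⟩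
  unfold D
  rw [Finset.prod_range_add]
  have h1 : ME (n + 1) (∏ i ∈ Finset.range c, (1 - (X : PS) ^ (6 * (m + i + 1)))) 1 := by
    refine prod_ME_one n _ _ fun i _ => ME.one_sub (by omega)
  have h2 := (ME.rfl (A := ∏ j ∈ Finset.range m, (1 - (X : PS) ^ (6 * (j + 1))))).mul h1
  rw [mul_one] at h2
  exact h2

lemma DB_unit (n N i : ℕ) (h1 : N - n ≤ i) (h2 : i ≤ N + n) (h3 : i ≤ 2 * N)
    (hbig : n + 1 ≤ 6 * (N - n + 1)) :
    ME (n + 1) (D N * B (2 * N) i) 1 := by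
  have hU : IsUnit (D i * D (2 * N - i)) := (D_unit _).mul (D_unit _)
  apply ME.cancel hU
  have hR4 := R4 (2 * N) i h3
  have e : (D i * D (2 * N - i)) * (D N * B (2 * N) i) = D N * D (2 * N) := by
    rw [← hR4]; ring
  rw [e, mul_one]
  have c1 : ME (n + 1) (D N) (D (N - n)) := D_stable n (by omega) hbig
  have c2 : ME (n + 1) (D (2 * N)) (D (N - n)) := D_stable n (by omega) hbig
  have c3 : ME (n + 1) (D i) (D (N - n)) := D_stable n h1 hbig
  have c4 : ME (n + 1) (D (2 * N - i)) (D (N - n)) := D_stable n (by omega) hbig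
  exact (c1.mul c2).trans ((c3.mul c4).symm)

lemma SSTH (n N : ℕ) (hnN : n ≤ N) (hbig : n + 1 ≤ 6 * (N - n + 1)) :
    ME (n + 1) (D N * SS N) (TH N) := by
  unfold SS TH hh
  rw [Finset.mul_sum]
  refine ME.sum fun i hi => ?_
  rcases le_or_gt (ee N i) n with hle | hgt
  · have hq : ((i : ℤ) - N) ^ 2 ≤ (n : ℤ) := by
      refine le_trans (qd_ge_sq _) ?_
      rw [← ee_cast]
      exact_mod_cast hle
    have hb := sq_le_bound hq
    have hi' : i < 2 * N + 1 := Finset.mem_range.mp hi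
    have hdb := DB_unit n N i (by omega) (by omega) (by omega) hbig
    have e : D N * ((X : PS) ^ (ee N i) * B (2 * N) i) =
        (X : PS) ^ (ee N i) * (D N * B (2 * N) i) := by ring
    rw [e]
    have h5 := (ME.rfl (A := (X : PS) ^ (ee N i))).mul hdb
    rw [mul_one] at h5
    exact h5
  · have e : D N * ((X : PS) ^ (ee N i) * B (2 * N) i) - (X : PS) ^ (ee N i) =
        (X : PS) ^ (ee N i) * (D N * B (2 * N) i - 1) := by ring
    unfold ME
    rw [e]
    exact Dvd.dvd.mul_right (pow_dvd_pow _ (by omega)) _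

end
end EtaQT
namespace EtaQT
noncomputable section
open Finset

lemma ME.of_eq {n : ℕ} {A B : PS} (h : A = B) : ME n A B := by rw [h]; exact ME.rfl

lemma NP (s : Finset ℕ) : NEG s * POS s = ∏ m ∈ s, (1 - (X : PS) ^ (2 * m)) := by
  unfold NEG POS
  rw [← Finset.prod_mul_distrib]
  refine Finset.prod_congr rfl fun m _ => ?_
  have h : (X : PS) ^ (2 * m) = X ^ m * X ^ m := by rw [← pow_add]; congr 1; omega
  rw [h]; ring

lemma double_image (s : Finset ℕ) :
    ∏ m ∈ s, (1 - (X : PS) ^ (2 * m)) = NEG (s.image (fun m => 2 * m)) := by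
  unfold NEG
  rw [Finset.prod_image]
  intro a _ b _ h; simp only at h; omega

lemma MULT (n d : ℕ) (hd : 1 ≤ d) :
    ME (n + 1) (NEG (M n d) * POS (M n d)) (NEG (M n (2 * d))) := by
  rw [NP, double_image]
  have h1 := NEG_trunc n ((M n d).image (fun m => 2 * m))
  have h2 : ((M n d).image (fun m => 2 * m)).filter (fun m => m ≤ n) = M n (2 * d) := by
    ext m
    simp only [Finset.mem_filter, Finset.mem_image, M, Finset.mem_Icc]
    constructor
    · rintro ⟨⟨m', ⟨⟨hm1, hm2⟩, hdvd⟩, rfl⟩, hle⟩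
      exact ⟨⟨by omega, hle⟩, mul_dvd_mul_left 2 hdvd⟩
    · rintro ⟨⟨h1m, h2m⟩, c, rfl⟩
      have hc0 : 0 < c := by
        rcases Nat.eq_zero_or_pos c with rfl | hc
        · simp at h1m
        · exact hc
      have hdc : 0 < d * c := Nat.mul_pos (by omega) hc0
      have hle2 : d * c ≤ 2 * (d * c) := Nat.le_mul_of_pos_left _ (by omega)
      have heq2 : 2 * (d * c) = 2 * d * c := by ring
      refine ⟨⟨d * c, ⟨⟨by omega, by omega⟩, dvd_mul_right d c⟩, by ring⟩, by omega⟩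
  rw [h2] at h1
  exact (ME.rfl).symm.trans h1

lemma POS_split (s : Finset ℕ) (p : ℕ → Prop) [DecidablePred p] :
    POS s = POS (s.filter p) * POS (s.filter (fun m => ¬ p m)) :=
  (Finset.prod_filter_mul_prod_filter_not s p _).symm

lemma pa (n : ℕ) :
    POS (M n 1) = POS (M n 2) * (POS (A n 3) * (POS (A n 1) * POS (A n 5))) := by
  have h1 : (M n 1).filter (fun m => 2 ∣ m) = M n 2 := by
    ext m
    simp only [Finset.mem_filter, M, Finset.mem_Icc, Nat.one_dvd, and_true]
  have h2 : ((M n 1).filter (fun m => ¬ 2 ∣ m)).filter (fun m => m % 6 = 3) = A n 3 := by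
    ext m
    simp only [Finset.mem_filter, M, A, Finset.mem_Icc, Nat.one_dvd, and_true]
    omega
  have h3 : (((M n 1).filter (fun m => ¬ 2 ∣ m)).filter (fun m => ¬ m % 6 = 3)).filter
      (fun m => m % 6 = 1) = A n 1 := by
    ext m
    simp only [Finset.mem_filter, M, A, Finset.mem_Icc, Nat.one_dvd, and_true]
    omega
  have h4 : (((M n 1).filter (fun m => ¬ 2 ∣ m)).filter (fun m => ¬ m % 6 = 3)).filter
      (fun m => ¬ m % 6 = 1) = A n 5 := by
    ext m
    simp only [Finset.mem_filter, M, A, Finset.mem_Icc, Nat.one_dvd, and_true]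
    omega
  rw [POS_split (M n 1) (fun m => 2 ∣ m), h1,
    POS_split ((M n 1).filter (fun m => ¬ 2 ∣ m)) (fun m => m % 6 = 3), h2,
    POS_split (((M n 1).filter (fun m => ¬ 2 ∣ m)).filter (fun m => ¬ m % 6 = 3))
      (fun m => m % 6 = 1), h3, h4]

lemma pb (n : ℕ) : POS (M n 3) = POS (M n 6) * POS (A n 3) := by
  have h1 : (M n 3).filter (fun m => 2 ∣ m) = M n 6 := by
    ext m
    simp only [Finset.mem_filter, M, Finset.mem_Icc]
    omega
  have h2 : (M n 3).filter (fun m => ¬ 2 ∣ m) = A n 3 := by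
    ext m
    simp only [Finset.mem_filter, M, A, Finset.mem_Icc]
    omega
  rw [POS_split (M n 3) (fun m => 2 ∣ m), h1, h2]

lemma Pr_ME_M (r : ℕ) (hr : 1 ≤ r) {n N : ℕ} (hN : n ≤ N) :
    ME (n + 1) (Pr N r) (NEG (M n r)) := by
  rw [Pr_eq_NEG N r hr]
  have h2 := NEG_trunc n ((Finset.range N).image (fun i => r * (i + 1)))
  rw [image_filter_eq_M N r n hr hN] at h2
  exact h2

lemma G_ME (n N : ℕ) (hN : n ≤ N) :
    ME (n + 1) (∏ j ∈ range N, ((1 + (X : PS) ^ (6 * j + 1)) * (1 + (X : PS) ^ (6 * j + 5))))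
      (POS (A n 1) * POS (A n 5)) := by
  rw [Finset.prod_mul_distrib]
  have g1 : ∏ j ∈ range N, (1 + (X : PS) ^ (6 * j + 1)) =
      POS ((range N).image (fun j => 6 * j + 1)) := by
    unfold POS; rw [Finset.prod_image]; intro a _ b _ h; simp only at h; omega
  have g5 : ∏ j ∈ range N, (1 + (X : PS) ^ (6 * j + 5)) =
      POS ((range N).image (fun j => 6 * j + 5)) := by
    unfold POS; rw [Finset.prod_image]; intro a _ b _ h; simp only at h; omega
  have e1 : (((range N).image (fun j => 6 * j + 1)).filter (fun m => m ≤ n)) = A n 1 := by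
    ext m
    simp only [Finset.mem_filter, Finset.mem_image, Finset.mem_range, A, Finset.mem_Icc]
    constructor
    · rintro ⟨⟨j, hj, rfl⟩, hle⟩
      exact ⟨⟨by omega, hle⟩, by omega⟩
    · rintro ⟨⟨h1m, h2m⟩, hmod⟩
      exact ⟨⟨(m - 1) / 6, by omega, by omega⟩, h2m⟩
  have e5 : (((range N).image (fun j => 6 * j + 5)).filter (fun m => m ≤ n)) = A n 5 := by
    ext m
    simp only [Finset.mem_filter, Finset.mem_image, Finset.mem_range, A, Finset.mem_Icc]
    constructor
    · rintro ⟨⟨j, hj, rfl⟩, hle⟩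
      exact ⟨⟨by omega, hle⟩, by omega⟩
    · rintro ⟨⟨h1m, h2m⟩, hmod⟩
      exact ⟨⟨(m - 5) / 6, by omega, by omega⟩, h2m⟩
  have t1 := POS_trunc n ((range N).image (fun j => 6 * j + 1))
  have t5 := POS_trunc n ((range N).image (fun j => 6 * j + 5))
  rw [e1] at t1; rw [e5] at t5
  rw [g1, g5]
  exact t1.mul t5

lemma constCoeff_f (r : ℕ) (hr : 1 ≤ r) : constantCoeff (f r) = 1 := by
  have h := coeff_f r 0
  rw [← coeff_zero_eq_constantCoeff_apply, h]
  unfold Pr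
  rw [Finset.prod_range_one, coeff_zero_eq_constantCoeff_apply, map_sub, map_one, map_pow,
    constantCoeff_X, zero_pow (by omega : r * (0 + 1) ≠ 0), sub_zero]

lemma main_eq : f 2 ^ 2 * f 3 * f 12 = theta * (f 1 * f 4 * f 6) := by
  ext n
  set N := 2 * n + 2 with hNdef
  have hN1 : n + 1 ≤ N := by omega
  have hf1 := f_ME_M 1 (by omega) (n := n) (N := N) hN1
  have hf2 := f_ME_M 2 (by omega) (n := n) (N := N) hN1
  have hf3 := f_ME_M 3 (by omega) (n := n) (N := N) hN1
  have hf4 := f_ME_M 4 (by omega) (n := n) (N := N) hN1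
  have hf6 := f_ME_M 6 (by omega) (n := n) (N := N) hN1
  have hf12 := f_ME_M 12 (by omega) (n := n) (N := N) hN1
  have hM2 : M n (2 * 1) = M n 2 := by norm_num
  have hM4 : M n (2 * 2) = M n 4 := by norm_num
  have hM6 : M n (2 * 3) = M n 6 := by norm_num
  have hM12 : M n (2 * 6) = M n 12 := by norm_num
  have m1 : ME (n + 1) (NEG (M n 2)) (NEG (M n 1) * POS (M n 1)) := by
    have := (MULT n 1 (by omega)).symm; rwa [hM2] at this
  have m2 : ME (n + 1) (NEG (M n 4)) (NEG (M n 2) * POS (M n 2)) := by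
    have := (MULT n 2 (by omega)).symm; rwa [hM4] at this
  have m3 : ME (n + 1) (NEG (M n 6)) (NEG (M n 3) * POS (M n 3)) := by
    have := (MULT n 3 (by omega)).symm; rwa [hM6] at this
  have m6 : ME (n + 1) (NEG (M n 12)) (NEG (M n 6) * POS (M n 6)) := by
    have := (MULT n 6 (by omega)).symm; rwa [hM12] at this
  -- left chain
  have CL : ME (n + 1) (f 2 ^ 2 * f 3 * f 12)
      ((NEG (M n 1) * POS (M n 1)) * (NEG (M n 1) * POS (M n 1)) * NEG (M n 3) *
        ((NEG (M n 3) * POS (M n 3)) * POS (M n 6))) := by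
    rw [pow_two]
    exact ((((hf2.trans m1).mul (hf2.trans m1)).mul hf3).mul
      (hf12.trans (m6.trans (m3.mul ME.rfl))))
  -- right chain
  have CR : ME (n + 1) (theta * (f 1 * f 4 * f 6))
      (((NEG (M n 3) * POS (M n 3)) * (POS (A n 1) * POS (A n 5))) *
        ((NEG (M n 1) * ((NEG (M n 1) * POS (M n 1)) * POS (M n 2))) *
          (NEG (M n 3) * POS (M n 3)))) := by
    refine ME.mul ?_ (ME.mul (ME.mul hf1 ?_) ?_)
    · have t1 := theta_ME n N (by omega)
      have t2 := (SSTH n N (by omega) (by omega)).symm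
      rw [← MFI N] at t2
      rw [D_eq_Pr] at t2
      have t4 := (Pr_ME_M 6 (by omega) (n := n) (N := N) (by omega)).mul (G_ME n N (by omega))
      exact t1.trans (t2.trans (t4.trans (m3.mul ME.rfl)))
    · exact hf4.trans (m2.trans ((m1.mul ME.rfl)))
    · exact hf6.trans m3
  rw [pa n, pb n] at CL CR
  have final : ME (n + 1) (f 2 ^ 2 * f 3 * f 12) (theta * (f 1 * f 4 * f 6)) :=
    CL.trans ((ME.of_eq (by ring)).trans CR.symm)
  exact final.coeff_eq (by omega)

theorem eta_quotient_theta' :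
    (f 2) ^ 2 * f 3 * f 12 * (f 1 * f 4 * f 6)⁻¹ = theta := by
  have hc : constantCoeff (f 1 * f 4 * f 6) ≠ 0 := by
    rw [map_mul, map_mul, constCoeff_f 1 (by omega), constCoeff_f 4 (by omega),
      constCoeff_f 6 (by omega)]
    norm_num
  rw [main_eq, mul_assoc, PowerSeries.mul_inv_cancel _ hc, mul_one]

end
end EtaQT

/-- The eta-quotient equals the theta series ∑_{k ∈ ℤ} q^(3k²+2k); the coefficient of qⁿ on
the right is the number of integers k with 3k² + 2k = n. -/


theorem eta_quotient_theta :
    (f 2) ^ 2 * f 3 * f 12 * (f 1 * f 4 * f 6)⁻¹ =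
      PowerSeries.mk fun n => (Set.ncard {k : ℤ | 3 * k ^ 2 + 2 * k = (n : ℤ)} : ℚ) :=
  EtaQT.eta_quotient_theta'
end
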